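/- For any two probability densities p₀ and q w.r.t. a σ-finite measure μ, any α, β > 0, and any n ∈ ℕ, the test set A = {x ∈ 𝒳ⁿ : α p₀ⁿ(x) < β qⁿ(x)} satisfies α P₀ⁿ(A) + β Qⁿ(Aᶜ) ≤ √(αβ) (∫√(p₀ q) dμ)ⁿ, where p₀ⁿ and qⁿ denote the n-fold product densities. -/

import Mathlib

open MeasureTheory Real

lemma sqrt_finset_prod {ι : Type*} (s : Finset ι) (f : ι → ℝ) (hf : ∀ i, 0 ≤ f i) :
    Real.sqrt (∏ i ∈ s, f i) = ∏ i ∈ s, Real.sqrt (f i) := by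
  classical
  induction s using Finset.cons_induction with
  | empty => simp
  | cons a s ha ih =>
    rw [Finset.prod_cons, Finset.prod_cons, Real.sqrt_mul (hf a), ih]

/-- Le Cam's testing bound: for the likelihood-ratio test set `A = {α p₀ⁿ < β qⁿ}`,
`α P₀ⁿ(A) + β Qⁿ(Aᶜ) ≤ √(αβ) ρ(p₀,q)ⁿ`. -/
theorem stmt1 {X : Type*} [MeasurableSpace X] (μ : Measure X) [SigmaFinite μ]
    (p0 q : X → ℝ) (hp0 : ∀ x, 0 ≤ p0 x) (hq : ∀ x, 0 ≤ q x)
    (hp0m : Measurable p0) (hqm : Measurable q)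
    (hp0i : Integrable p0 μ) (hqi : Integrable q μ)
    (hp01 : ∫ x, p0 x ∂μ = 1) (hq1 : ∫ x, q x ∂μ = 1)
    (α β : ℝ) (hα : 0 < α) (hβ : 0 < β) (n : ℕ) :
    α * (∫ x in {x : Fin n → X | α * ∏ i, p0 (x i) < β * ∏ i, q (x i)},
          ∏ i, p0 (x i) ∂(Measure.pi fun _ : Fin n => μ))
    + β * (∫ x in {x : Fin n → X | α * ∏ i, p0 (x i) < β * ∏ i, q (x i)}ᶜ,
          ∏ i, q (x i) ∂(Measure.pi fun _ : Fin n => μ))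
    ≤ Real.sqrt (α * β) * (∫ x, Real.sqrt (p0 x * q x) ∂μ)^n := by
  letI : MeasureSpace X := ⟨μ⟩
  set ν : Measure (Fin n → X) := Measure.pi fun _ : Fin n => μ with hν
  have hνvol : ν = (volume : Measure (Fin n → X)) := rfl
  set P : (Fin n → X) → ℝ := fun x => ∏ i, p0 (x i) with hP
  set Q : (Fin n → X) → ℝ := fun x => ∏ i, q (x i) with hQ
  set S : (Fin n → X) → ℝ := fun x => ∏ i, Real.sqrt (p0 (x i) * q (x i)) with hS
  have hPnn : ∀ x, 0 ≤ P x := fun x => Finset.prod_nonneg fun i _ => hp0 (x i)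
  have hQnn : ∀ x, 0 ≤ Q x := fun x => Finset.prod_nonneg fun i _ => hq (x i)
  have hSint : Integrable (fun x => Real.sqrt (p0 x * q x)) μ := by
    refine (hp0i.add hqi).mono' ((hp0m.mul hqm).sqrt.aestronglyMeasurable) ?_
    refine ae_of_all _ fun x => ?_
    rw [Real.norm_eq_abs, abs_of_nonneg (Real.sqrt_nonneg _)]
    have h1 : p0 x * q x ≤ (p0 x + q x) ^ 2 := by nlinarith [hp0 x, hq x]
    calc Real.sqrt (p0 x * q x) ≤ Real.sqrt ((p0 x + q x) ^ 2) := Real.sqrt_le_sqrt h1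
      _ = p0 x + q x := Real.sqrt_sq (add_nonneg (hp0 x) (hq x))
  have hPint : Integrable P ν := by
    rw [hνvol]; exact Integrable.fintype_prod (f := fun _ : Fin n => p0) fun _ => hp0i
  have hQint : Integrable Q ν := by
    rw [hνvol]; exact Integrable.fintype_prod (f := fun _ : Fin n => q) fun _ => hqi
  have hSprod : Integrable S ν := by
    rw [hνvol]
    exact Integrable.fintype_prod (f := fun _ : Fin n => fun x => Real.sqrt (p0 x * q x))
      fun _ => hSint
  have hSeq : ∀ x, Real.sqrt (P x * Q x) = S x := by
    intro x
    rw [hP, hQ, hS, ← Finset.prod_mul_distrib]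
    exact sqrt_finset_prod _ _ fun i => mul_nonneg (hp0 (x i)) (hq (x i))
  set A : Set (Fin n → X) := {x | α * P x < β * Q x} with hA
  have hPm : Measurable P := Finset.measurable_prod _ fun i _ => hp0m.comp (measurable_pi_apply i)
  have hQm : Measurable Q := Finset.measurable_prod _ fun i _ => hqm.comp (measurable_pi_apply i)
  have hAm : MeasurableSet A := measurableSet_lt (hPm.const_mul α) (hQm.const_mul β)
  -- pointwise bounds
  have hptA : ∀ x ∈ A, α * P x ≤ Real.sqrt (α * β) * S x := by
    intro x hx
    rw [← hSeq x, ← Real.sqrt_mul (by positivity), ← mul_assoc, mul_comm (α * β) (P x),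
      ← mul_assoc]
    have hxlt : α * P x < β * Q x := hx
    have hle : (α * P x) ^ 2 ≤ P x * α * β * Q x := by
      have h := mul_le_mul_of_nonneg_right hxlt.le (mul_nonneg hα.le (hPnn x))
      nlinarith [h]
    calc α * P x = Real.sqrt ((α * P x) ^ 2) :=
        (Real.sqrt_sq (mul_nonneg hα.le (hPnn x))).symm
      _ ≤ Real.sqrt (P x * α * β * Q x) := Real.sqrt_le_sqrt hle
  have hptAc : ∀ x ∈ Aᶜ, β * Q x ≤ Real.sqrt (α * β) * S x := by
    intro x hx
    rw [← hSeq x, ← Real.sqrt_mul (by positivity), ← mul_assoc, mul_comm (α * β) (P x),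
      ← mul_assoc]
    have hxc : β * Q x ≤ α * P x := by
      simp only [hA, Set.mem_compl_iff, Set.mem_setOf_eq, not_lt] at hx; linarith
    have hle : (β * Q x) ^ 2 ≤ P x * α * β * Q x := by
      have h := mul_le_mul_of_nonneg_right hxc (mul_nonneg hβ.le (hQnn x))
      nlinarith [h]
    calc β * Q x = Real.sqrt ((β * Q x) ^ 2) :=
        (Real.sqrt_sq (mul_nonneg hβ.le (hQnn x))).symm
      _ ≤ Real.sqrt (P x * α * β * Q x) := Real.sqrt_le_sqrt hle
  have h1 : α * ∫ x in A, P x ∂ν ≤ Real.sqrt (α * β) * ∫ x in A, S x ∂ν := by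
    rw [← integral_const_mul, ← integral_const_mul]
    exact setIntegral_mono_on (hPint.integrableOn.const_mul α)
      (hSprod.integrableOn.const_mul _) hAm hptA
  have h2 : β * ∫ x in Aᶜ, Q x ∂ν ≤ Real.sqrt (α * β) * ∫ x in Aᶜ, S x ∂ν := by
    rw [← integral_const_mul, ← integral_const_mul]
    exact setIntegral_mono_on (hQint.integrableOn.const_mul β)
      (hSprod.integrableOn.const_mul _) hAm.compl hptAc
  have hsplit : (∫ x in A, S x ∂ν) + (∫ x in Aᶜ, S x ∂ν) = ∫ x, S x ∂ν :=
    integral_add_compl hAm hSprod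
  have hSval : ∫ x, S x ∂ν = (∫ x, Real.sqrt (p0 x * q x) ∂μ) ^ n := by
    rw [hνvol, hS]
    rw [show (volume : Measure (Fin n → X)) = Measure.pi fun _ => μ from rfl,
      integral_fintype_prod_eq_pow (fun x => Real.sqrt (p0 x * q x))]
    simp only [Fintype.card_fin]
  calc α * (∫ x in A, P x ∂ν) + β * (∫ x in Aᶜ, Q x ∂ν)
      ≤ Real.sqrt (α * β) * (∫ x in A, S x ∂ν) + Real.sqrt (α * β) * (∫ x in Aᶜ, S x ∂ν) :=
        add_le_add h1 h2
    _ = Real.sqrt (α * β) * ((∫ x in A, S x ∂ν) + (∫ x in Aᶜ, S x ∂ν)) := by ring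
    _ = Real.sqrt (α * β) * (∫ x, Real.sqrt (p0 x * q x) ∂μ) ^ n := by rw [hsplit, hSval]
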